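/- arXiv:1505.03749 — 2 statements merged into one kernel-verified Lean document; each statement's English description precedes it below -/
import Mathlib

section
/- Let a be bounded measurable with a ≥ 0 a.e. Suppose there exists w ∈ 𝒩_∞ with E_∞(w) = m_∞ (a ground state of the autonomous problem) such that c_α ∬ a(x) |w(x)|^p |w(y)|^p |x−y|^{α−N} dx dy > 0 (which holds in particular if w > 0 a.e. and a > 0 on a set of positive measure). Then m < m_∞, where m := inf{E_a(u) : u ∈ 𝒩_a} and m_∞ := inf{E_∞(u) : u ∈ 𝒩_∞}. -/
open MeasureTheory Filter

noncomputable section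

/-- Euclidean space `ℝ^N`. -/
abbrev RN (N : ℕ) : Type := EuclideanSpace ℝ (Fin N)

/-- The `H^s` bilinear form `⟨u,v⟩_s`. -/
def gIn (N : ℕ) (s : ℝ) (u v : RN N → ℝ) : ℝ :=
  (∫ x : RN N, u x * v x) +
    ∫ q : RN N × RN N, (u q.1 - u q.2) * (v q.1 - v q.2) * ‖q.1 - q.2‖ ^ (-((N : ℝ) + 2 * s))

/-- The `H^s` norm `‖u‖_s`. -/
def HsNorm (N : ℕ) (s : ℝ) (u : RN N → ℝ) : ℝ := Real.sqrt (gIn N s u u)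

/-- The fractional Sobolev space `H^s = {u ∈ L² : ‖u‖_s < ∞}`. -/
def HsSet (N : ℕ) (s : ℝ) : Set (RN N → ℝ) :=
  {u | MemLp u 2 volume ∧
    (∫⁻ q : RN N × RN N,
        ENNReal.ofReal ((u q.1 - u q.2) ^ 2 * ‖q.1 - q.2‖ ^ (-((N : ℝ) + 2 * s)))) < ⊤}

/-- The Riesz potential normalization constant `c_α`. -/
def cRiesz (N : ℕ) (α : ℝ) : ℝ :=
  Real.Gamma (((N : ℝ) - α) / 2) / (Real.Gamma (α / 2) * Real.pi ^ ((N : ℝ) / 2) * 2 ^ α)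

/-- The nonlocal term `D_a(u) = c_α ∬ (1+a(x)) |u(x)|^p |u(y)|^p |x-y|^{α-N}`. -/
def Dfn (N : ℕ) (α p : ℝ) (a u : RN N → ℝ) : ℝ :=
  cRiesz N α *
    ∫ q : RN N × RN N, (1 + a q.1) * |u q.1| ^ p * |u q.2| ^ p * ‖q.1 - q.2‖ ^ (α - (N : ℝ))

/-- The nonlocal term `T_a(u)[v] = c_α ∬ (1+a(x)) |u(y)|^p |u(x)|^{p-2} u(x) v(x) |x-y|^{α-N}`. -/
def Tfn (N : ℕ) (α p : ℝ) (a u v : RN N → ℝ) : ℝ :=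
  cRiesz N α *
    ∫ q : RN N × RN N,
      (1 + a q.1) * |u q.2| ^ p * |u q.1| ^ (p - 2) * u q.1 * v q.1 * ‖q.1 - q.2‖ ^ (α - (N : ℝ))

/-- The energy functional `E_a(u) = ½‖u‖_s² - (1/(2p)) D_a(u)`. -/
def Efn (N : ℕ) (s α p : ℝ) (a u : RN N → ℝ) : ℝ :=
  (1 / 2) * gIn N s u u - (1 / (2 * p)) * Dfn N α p a u

/-- The Nehari set `𝒩_a`. -/
def Nehari (N : ℕ) (s α p : ℝ) (a : RN N → ℝ) : Set (RN N → ℝ) :=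
  {u | u ∈ HsSet N s ∧ ¬(u =ᵐ[volume] (0 : RN N → ℝ)) ∧ gIn N s u u = Dfn N α p a u}

theorem stmt_17 {N : ℕ} (hN : 1 ≤ N) {s α p : ℝ}
    (hs0 : 0 < s) (hs1 : s < 1) (hα0 : 0 < α) (hαN : α < (N : ℝ))
    (hp : 2 ≤ p)
    (hlow : ((N : ℝ) - 2 * s) / ((N : ℝ) + α) < 1 / p)
    (hhigh : 1 / p < (N : ℝ) / ((N : ℝ) + α))
    (a : RN N → ℝ) (ha_meas : Measurable a) (ha_bdd : ∃ M : ℝ, ∀ x, |a x| ≤ M)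
    (ha_nonneg : ∀ᵐ x ∂(volume : Measure (RN N)), 0 ≤ a x)
    (hw : ∃ w ∈ Nehari N s α p (fun _ => (0 : ℝ)),
      Efn N s α p (fun _ => (0 : ℝ)) w = sInf {r : ℝ | ∃ v ∈ Nehari N s α p (fun _ => (0 : ℝ)), Efn N s α p (fun _ => (0 : ℝ)) v = r} ∧
      0 < cRiesz N α * ∫ q : RN N × RN N,
        a q.1 * |w q.1| ^ p * |w q.2| ^ p * ‖q.1 - q.2‖ ^ (α - (N : ℝ))) :
    sInf {r : ℝ | ∃ v ∈ Nehari N s α p a, Efn N s α p a v = r} < sInf {r : ℝ | ∃ v ∈ Nehari N s α p (fun _ => (0 : ℝ)), Efn N s α p (fun _ => (0 : ℝ)) v = r} := by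
  classical
  obtain ⟨w, ⟨hwHs, hwne, hwg⟩, hwE, hwA⟩ := hw
  have hppos : (0:ℝ) < p := lt_of_lt_of_le two_pos hp
  -- nonnegativity of the second integral in gIn
  have hsec : ∀ v : RN N → ℝ, 0 ≤ ∫ q : RN N × RN N,
      (v q.1 - v q.2) * (v q.1 - v q.2) * ‖q.1 - q.2‖ ^ (-((N : ℝ) + 2 * s)) :=
    fun v => integral_nonneg fun q =>
      mul_nonneg (mul_self_nonneg _) (Real.rpow_nonneg (norm_nonneg _) _)
  have hgv : ∀ v : RN N → ℝ, 0 ≤ gIn N s v v := fun v =>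
    add_nonneg (integral_nonneg fun x => mul_self_nonneg _) (hsec v)
  -- g > 0
  have hw2int : Integrable (fun x => w x * w x) volume := by
    simpa [pow_two] using hwHs.1.integrable_sq
  have hI1pos : 0 < ∫ x : RN N, w x * w x := by
    rcases lt_or_eq_of_le (integral_nonneg (f := fun x => w x * w x) fun x => mul_self_nonneg (w x)) with h | h
    · exact h
    · exfalso
      apply hwne
      have h0 := (integral_eq_zero_iff_of_nonneg (fun x => mul_self_nonneg (w x)) hw2int).mp h.symm
      filter_upwards [h0] with x hx
      exact mul_self_eq_zero.mp hx
  have hgpos : 0 < gIn N s w w := by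
    have := hsec w
    unfold gIn
    linarith
  -- the Riesz-kernel integrands
  set F : RN N × RN N → ℝ :=
    fun q => |w q.1| ^ p * |w q.2| ^ p * ‖q.1 - q.2‖ ^ (α - (N : ℝ)) with hF
  set G : RN N × RN N → ℝ :=
    fun q => a q.1 * |w q.1| ^ p * |w q.2| ^ p * ‖q.1 - q.2‖ ^ (α - (N : ℝ)) with hG
  have hD0 : Dfn N α p (fun _ => (0:ℝ)) w = cRiesz N α * ∫ q, F q := by
    unfold Dfn
    congr 1
    congr 1
    funext q
    simp [hF]
  have hcF : cRiesz N α * ∫ q, F q = gIn N s w w := by rw [← hD0, ← hwg]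
  have hFint : Integrable F volume := by
    by_contra hni
    rw [integral_undef hni, mul_zero] at hcF
    exact hgpos.ne (hcF)
  have hGint : Integrable G volume := by
    by_contra hni
    rw [hG] at hni
    rw [integral_undef hni, mul_zero] at hwA
    exact lt_irrefl _ hwA
  -- D_a(w) = g + A
  have hDa : Dfn N α p a w = gIn N s w w + cRiesz N α * ∫ q, G q := by
    unfold Dfn
    have hsplit : (fun q : RN N × RN N =>
        (1 + a q.1) * |w q.1| ^ p * |w q.2| ^ p * ‖q.1 - q.2‖ ^ (α - (N : ℝ)))
        = fun q => F q + G q := by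
      funext q; simp only [hF, hG]; ring
    rw [hsplit, integral_add hFint hGint, mul_add, hcF]
  have hApos : 0 < cRiesz N α * ∫ q, G q := hwA
  have hgD : gIn N s w w < Dfn N α p a w := by rw [hDa]; linarith
  have hDpos : 0 < Dfn N α p a w := lt_trans hgpos hgD
  -- the scaling parameter t
  set e : ℝ := p + p - 2 with he_def
  have hepos : 0 < e := by simp only [he_def]; linarith
  set t : ℝ := (gIn N s w w / Dfn N α p a w) ^ e⁻¹ with ht_def
  have hratio_pos : 0 < gIn N s w w / Dfn N α p a w := div_pos hgpos hDpos
  have hratio_lt : gIn N s w w / Dfn N α p a w < 1 := (div_lt_one hDpos).mpr hgD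
  have ht0 : 0 < t := Real.rpow_pos_of_pos hratio_pos _
  have ht1 : t < 1 := Real.rpow_lt_one hratio_pos.le hratio_lt (by positivity)
  have hte : t ^ e = gIn N s w w / Dfn N α p a w := by
    rw [ht_def, ← Real.rpow_mul hratio_pos.le, inv_mul_cancel₀ hepos.ne', Real.rpow_one]
  -- the scaled function
  set u : RN N → ℝ := fun x => t * w x with hu_def
  -- scaling of gIn
  have hgu : gIn N s u u = t * t * gIn N s w w := by
    unfold gIn
    have e1 : (fun x => u x * u x) = fun x => t * t * (w x * w x) := by
      funext x; simp only [hu_def]; ring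
    have e2 : (fun q : RN N × RN N =>
        (u q.1 - u q.2) * (u q.1 - u q.2) * ‖q.1 - q.2‖ ^ (-((N : ℝ) + 2 * s)))
        = fun q => t * t * ((w q.1 - w q.2) * (w q.1 - w q.2) * ‖q.1 - q.2‖ ^ (-((N : ℝ) + 2 * s))) := by
      funext q; simp only [hu_def]; ring
    rw [e1, e2, integral_const_mul, integral_const_mul]
    ring
  -- scaling of Dfn
  have habs : ∀ x : RN N, |u x| ^ p = t ^ p * |w x| ^ p := by
    intro x
    rw [hu_def]
    simp only
    rw [abs_mul, abs_of_pos ht0, Real.mul_rpow ht0.le (abs_nonneg _)]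
  have hDu : Dfn N α p a u = t ^ p * t ^ p * Dfn N α p a w := by
    unfold Dfn
    have e3 : (fun q : RN N × RN N =>
        (1 + a q.1) * |u q.1| ^ p * |u q.2| ^ p * ‖q.1 - q.2‖ ^ (α - (N : ℝ)))
        = fun q => t ^ p * t ^ p *
          ((1 + a q.1) * |w q.1| ^ p * |w q.2| ^ p * ‖q.1 - q.2‖ ^ (α - (N : ℝ))) := by
      funext q; rw [habs q.1, habs q.2]; ring
    rw [e3, integral_const_mul]
    ring
  -- the Nehari identity for u
  have hpow : t ^ p * t ^ p = t * t * t ^ e := by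
    have h1 : p + p = 1 + 1 + e := by rw [he_def]; ring
    calc t ^ p * t ^ p = t ^ (p + p) := (Real.rpow_add ht0 p p).symm
      _ = t ^ ((1:ℝ) + 1 + e) := by rw [h1]
      _ = t ^ (1:ℝ) * t ^ (1:ℝ) * t ^ e := by
          rw [Real.rpow_add ht0, Real.rpow_add ht0]
      _ = t * t * t ^ e := by rw [Real.rpow_one]
  have hNehu_eq : gIn N s u u = Dfn N α p a u := by
    rw [hgu, hDu, hpow, hte]
    field_simp
  -- u ∈ HsSet
  have huHs : u ∈ HsSet N s := by
    constructor
    · exact hwHs.1.const_mul t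
    · have e5 : ∀ q : RN N × RN N,
          ENNReal.ofReal ((u q.1 - u q.2) ^ 2 * ‖q.1 - q.2‖ ^ (-((N : ℝ) + 2 * s)))
          = ENNReal.ofReal (t ^ 2) *
            ENNReal.ofReal ((w q.1 - w q.2) ^ 2 * ‖q.1 - q.2‖ ^ (-((N : ℝ) + 2 * s))) := by
        intro q
        rw [← ENNReal.ofReal_mul (sq_nonneg t)]
        congr 1
        simp only [hu_def]
        ring
      calc (∫⁻ q : RN N × RN N,
            ENNReal.ofReal ((u q.1 - u q.2) ^ 2 * ‖q.1 - q.2‖ ^ (-((N : ℝ) + 2 * s))))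
          = ∫⁻ q : RN N × RN N, ENNReal.ofReal (t ^ 2) *
            ENNReal.ofReal ((w q.1 - w q.2) ^ 2 * ‖q.1 - q.2‖ ^ (-((N : ℝ) + 2 * s))) :=
            lintegral_congr e5
        _ = ENNReal.ofReal (t ^ 2) * ∫⁻ q : RN N × RN N,
            ENNReal.ofReal ((w q.1 - w q.2) ^ 2 * ‖q.1 - q.2‖ ^ (-((N : ℝ) + 2 * s))) :=
            lintegral_const_mul' _ _ ENNReal.ofReal_ne_top
        _ < ⊤ := ENNReal.mul_lt_top ENNReal.ofReal_lt_top hwHs.2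
  have hune : ¬(u =ᵐ[volume] (0 : RN N → ℝ)) := by
    intro h
    apply hwne
    filter_upwards [h] with x hx
    have : t * w x = 0 := hx
    have := (mul_eq_zero.mp this).resolve_left ht0.ne'
    simpa using this
  have huN : u ∈ Nehari N s α p a := ⟨huHs, hune, hNehu_eq⟩
  -- energy bounds
  have hEa_u : Efn N s α p a u = (1 / 2 - 1 / (2 * p)) * (t * t * gIn N s w w) := by
    unfold Efn
    rw [← hNehu_eq, hgu]
    ring
  have hE0_w : Efn N s α p (fun _ => (0:ℝ)) w = (1 / 2 - 1 / (2 * p)) * gIn N s w w := by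
    unfold Efn
    rw [← hwg]
    ring
  have hcoef : 0 < 1 / 2 - 1 / (2 * p) := by
    have : 1 / (2 * p) ≤ 1 / 4 := by
      apply one_div_le_one_div_of_le <;> linarith
    linarith
  have htt1 : t * t < 1 := by nlinarith
  have hlt : Efn N s α p a u < Efn N s α p (fun _ => (0:ℝ)) w := by
    rw [hEa_u, hE0_w]
    have h1 : t * t * gIn N s w w < gIn N s w w := by
      calc t * t * gIn N s w w < 1 * gIn N s w w := mul_lt_mul_of_pos_right htt1 hgpos
        _ = gIn N s w w := one_mul _
    exact mul_lt_mul_of_pos_left h1 hcoef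
  -- lower bound for the infimum set
  have hbdd : BddBelow {r : ℝ | ∃ v ∈ Nehari N s α p a, Efn N s α p a v = r} := by
    refine ⟨0, fun r hr => ?_⟩
    obtain ⟨v, ⟨_, _, hveq⟩, hvr⟩ := hr
    rw [← hvr]
    unfold Efn
    rw [← hveq]
    have h2 : 1 / 2 * gIn N s v v - 1 / (2 * p) * gIn N s v v
        = (1 / 2 - 1 / (2 * p)) * gIn N s v v := by ring
    rw [h2]
    exact mul_nonneg hcoef.le (hgv v)
  have hmem : Efn N s α p a u ∈ {r : ℝ | ∃ v ∈ Nehari N s α p a, Efn N s α p a v = r} :=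
    ⟨u, huN, rfl⟩
  calc sInf {r : ℝ | ∃ v ∈ Nehari N s α p a, Efn N s α p a v = r}
      ≤ Efn N s α p a u := csInf_le hbdd hmem
    _ < Efn N s α p (fun _ => (0:ℝ)) w := hlt
    _ = _ := hwE
end
end

section
/- Let a be bounded measurable with a ≥ 0 a.e. For every u ∈ 𝒩_a there exists t ∈ (0, 1] such that t·|u| ∈ 𝒩_a and E_a(t|u|) ≤ E_a(u); here |u| denotes x ↦ |u(x)|. Consequently, any minimizing sequence for E_a on 𝒩_a can be replaced by a minimizing sequence of nonnegative functions. -/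
open MeasureTheory Filter

noncomputable section

set_option maxHeartbeats 2000000 in
theorem stmt_18 {N : ℕ} (hN : 1 ≤ N) {s α p : ℝ}
    (hs0 : 0 < s) (hs1 : s < 1) (hα0 : 0 < α) (hαN : α < (N : ℝ))
    (hp : 2 ≤ p)
    (hlow : ((N : ℝ) - 2 * s) / ((N : ℝ) + α) < 1 / p)
    (hhigh : 1 / p < (N : ℝ) / ((N : ℝ) + α))
    (a : RN N → ℝ) (ha_meas : Measurable a) (ha_bdd : ∃ M : ℝ, ∀ x, |a x| ≤ M)
    (ha_nonneg : ∀ᵐ x ∂(volume : Measure (RN N)), 0 ≤ a x)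
    (u : RN N → ℝ) (hu : u ∈ Nehari N s α p a) :
    ∃ t : ℝ, 0 < t ∧ t ≤ 1 ∧ (fun x => t * |u x|) ∈ Nehari N s α p a ∧
      Efn N s α p a (fun x => t * |u x|) ≤ Efn N s α p a u := by
  classical
  obtain ⟨⟨hu2, hufin⟩, hune, hNeh⟩ := hu
  have hum := hu2.aestronglyMeasurable
  set w : RN N × RN N → ℝ := fun q => ‖q.1 - q.2‖ ^ (-((N : ℝ) + 2 * s)) with hw_def
  have hw0 : ∀ q, 0 ≤ w q := fun q => Real.rpow_nonneg (norm_nonneg _) _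
  have hwm : Measurable w := by
    have : Measurable (fun q : RN N × RN N => ‖q.1 - q.2‖) :=
      (measurable_fst.sub measurable_snd).norm
    exact this.pow measurable_const
  set F : RN N × RN N → ℝ := fun q => (u q.1 - u q.2) * (u q.1 - u q.2) * w q with hF_def
  set Fa : RN N × RN N → ℝ :=
    fun q => (|u q.1| - |u q.2|) * (|u q.1| - |u q.2|) * w q with hFa_def
  have hF0 : ∀ q, 0 ≤ F q := fun q => mul_nonneg (mul_self_nonneg _) (hw0 q)
  have hFa0 : ∀ q, 0 ≤ Fa q := fun q => mul_nonneg (mul_self_nonneg _) (hw0 q)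
  have habs : ∀ A B : ℝ, (|A| - |B|) * (|A| - |B|) ≤ (A - B) * (A - B) := by
    intro A B
    have h := mul_self_le_mul_self (abs_nonneg (|A| - |B|)) (abs_abs_sub_abs_le_abs_sub A B)
    simpa [abs_mul_abs_self] using h
  have hFale : ∀ q, Fa q ≤ F q := fun q =>
    mul_le_mul_of_nonneg_right (habs _ _) (hw0 q)
  have h1m : AEStronglyMeasurable (fun q : RN N × RN N => u q.1) volume := by
    rw [Measure.volume_eq_prod]; exact hum.comp_quasiMeasurePreserving Measure.quasiMeasurePreserving_fst
  have h2m : AEStronglyMeasurable (fun q : RN N × RN N => u q.2) volume := by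
    rw [Measure.volume_eq_prod]; exact hum.comp_quasiMeasurePreserving Measure.quasiMeasurePreserving_snd
  have hFm : AEStronglyMeasurable F volume :=
    ((h1m.sub h2m).mul (h1m.sub h2m)).mul hwm.aestronglyMeasurable
  have hufin' : (∫⁻ q : RN N × RN N, ENNReal.ofReal (F q)) < ⊤ := by
    simpa only [hF_def, hw_def, pow_two] using hufin
  have hFi : Integrable F := by
    refine ⟨hFm, ?_⟩
    rw [hasFiniteIntegral_iff_ofReal (Filter.Eventually.of_forall hF0)]
    exact hufin'
  set K : ℝ := ∫ q : RN N × RN N, F q with hK_def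
  set Ka : ℝ := ∫ q : RN N × RN N, Fa q with hKa_def
  have hK0 : 0 ≤ K := integral_nonneg hF0
  have hKa0 : 0 ≤ Ka := integral_nonneg hFa0
  have hKaK : Ka ≤ K :=
    integral_mono_of_nonneg (Filter.Eventually.of_forall hFa0) hFi
      (Filter.Eventually.of_forall hFale)
  set I2 : ℝ := ∫ x : RN N, u x * u x with hI2_def
  have hI2int : Integrable (fun x : RN N => u x * u x) := by
    simpa [pow_two] using hu2.integrable_sq
  have hI2pos : 0 < I2 := by
    rcases lt_or_eq_of_le (integral_nonneg (f := fun x => u x * u x) (fun x => mul_self_nonneg (u x))) with h | h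
    · exact h
    · exfalso
      apply hune
      have hz := (integral_eq_zero_iff_of_nonneg (fun x => mul_self_nonneg (u x)) hI2int).1 h.symm
      filter_upwards [hz] with x hx
      exact mul_self_eq_zero.1 hx
  have hg_eq : gIn N s u u = I2 + K := rfl
  have hG_eq : gIn N s (fun x => |u x|) (fun x => |u x|) = I2 + Ka := by
    have h5 : (∫ x : RN N, |u x| * |u x|) = I2 := by
      rw [hI2_def]; congr 1; funext x; exact abs_mul_abs_self (u x)
    rw [gIn, h5]
  set G : ℝ := I2 + Ka with hG_def
  set g : ℝ := I2 + K with hg2_def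
  set D : ℝ := Dfn N α p a u with hD_def
  have hgD : g = D := hNeh
  have hGpos : 0 < G := by positivity
  have hgpos : 0 < g := by positivity
  have hDpos : 0 < D := hgD ▸ hgpos
  have hGg : G ≤ g := by rw [hG_def, hg2_def]; linarith
  set r : ℝ := G / D with hr_def
  have hr0 : 0 < r := div_pos hGpos hDpos
  have hr1 : r ≤ 1 := (div_le_one hDpos).2 (hGg.trans hgD.le)
  have h2p : (0:ℝ) < 2 * p - 2 := by linarith
  set e : ℝ := 1 / (2 * p - 2) with he_def
  have he0 : 0 < e := by positivity
  set t : ℝ := r ^ e with ht_def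
  have ht0 : 0 < t := Real.rpow_pos_of_pos hr0 e
  have ht1 : t ≤ 1 := Real.rpow_le_one hr0.le hr1 he0.le
  have htt1 : t * t ≤ 1 := by
    simpa using mul_le_mul ht1 ht1 ht0.le zero_le_one
  -- scaling identities
  have hint1 : (∫ x : RN N, (t * |u x|) * (t * |u x|)) = t * t * ∫ x : RN N, |u x| * |u x| := by
    rw [← integral_const_mul]; congr 1; funext x; ring
  have hint2 : (∫ q : RN N × RN N,
        ((t * |u q.1|) - (t * |u q.2|)) * ((t * |u q.1|) - (t * |u q.2|)) *
          ‖q.1 - q.2‖ ^ (-((N:ℝ) + 2 * s)))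
      = t * t * ∫ q : RN N × RN N,
          (|u q.1| - |u q.2|) * (|u q.1| - |u q.2|) * ‖q.1 - q.2‖ ^ (-((N:ℝ) + 2 * s)) := by
    rw [← integral_const_mul]; congr 1; funext q; ring
  have hgsc : gIn N s (fun x => t * |u x|) (fun x => t * |u x|) = t * t * G := by
    rw [← hG_eq]
    simp only [gIn]
    rw [hint1, hint2]; ring
  have hab : ∀ x : RN N, abs (t * |u x|) ^ p = t ^ p * |u x| ^ p := by
    intro x
    rw [abs_mul, abs_of_pos ht0, abs_abs, Real.mul_rpow ht0.le (abs_nonneg _)]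
  have hint3 : (∫ q : RN N × RN N,
        (1 + a q.1) * abs (t * |u q.1|) ^ p * abs (t * |u q.2|) ^ p *
          ‖q.1 - q.2‖ ^ (α - (N:ℝ)))
      = (t ^ p * t ^ p) * ∫ q : RN N × RN N,
          (1 + a q.1) * |u q.1| ^ p * |u q.2| ^ p * ‖q.1 - q.2‖ ^ (α - (N:ℝ)) := by
    rw [← integral_const_mul]; congr 1; funext q; rw [hab q.1, hab q.2]; ring
  have hDsc : Dfn N α p a (fun x => t * |u x|) = (t ^ p * t ^ p) * D := by
    rw [hD_def]
    simp only [Dfn]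
    rw [hint3]; ring
  have hrD : r * D = G := div_mul_cancel₀ G hDpos.ne'
  have hNehEq : t * t * G = (t ^ p * t ^ p) * D := by
    have hkey : t ^ (2 * p - 2) = r := by
      rw [ht_def, ← Real.rpow_mul hr0.le,
        show e * (2 * p - 2) = 1 from by rw [he_def]; field_simp; exact div_self (sub_pos.2 (by linarith : (1:ℝ) < p)).ne', Real.rpow_one]
    have htpp : t ^ p * t ^ p = t * t * r := by
      have h1 : t ^ p * t ^ p = t ^ (p + p) := (Real.rpow_add ht0 p p).symm
      rw [h1, show p + p = 1 + 1 + (2 * p - 2) from by ring, Real.rpow_add ht0,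
        Real.rpow_add ht0, Real.rpow_one, hkey]
    rw [htpp, mul_assoc (t * t) r D, hrD]
  clear_value w F Fa K Ka I2 G g D r e t
  refine ⟨t, ht0, ht1, ⟨⟨?_, ?_⟩, ?_, ?_⟩, ?_⟩
  · have h1 : MemLp (fun x : RN N => |u x|) 2 volume := by
      simpa [Real.norm_eq_abs] using hu2.norm
    exact h1.const_mul t
  · have key : ∀ A B : ℝ, (t * |A| - t * |B|) ^ 2 ≤ (A - B) ^ 2 := by
      intro A B
      have h1 : (|A| - |B|) * (|A| - |B|) ≤ (A - B) * (A - B) := habs A B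
      have h3 : t * t * ((|A| - |B|) * (|A| - |B|)) ≤ 1 * ((A - B) * (A - B)) :=
        mul_le_mul htt1 h1 (mul_self_nonneg _) zero_le_one
      calc (t * |A| - t * |B|) ^ 2 = t * t * ((|A| - |B|) * (|A| - |B|)) := by ring
        _ ≤ 1 * ((A - B) * (A - B)) := h3
        _ = (A - B) ^ 2 := by ring
    calc (∫⁻ q : RN N × RN N, ENNReal.ofReal
            (((fun x => t * |u x|) q.1 - (fun x => t * |u x|) q.2) ^ 2 *
              ‖q.1 - q.2‖ ^ (-((N : ℝ) + 2 * s))))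
        ≤ ∫⁻ q : RN N × RN N, ENNReal.ofReal
            ((u q.1 - u q.2) ^ 2 * ‖q.1 - q.2‖ ^ (-((N : ℝ) + 2 * s))) := by
          refine lintegral_mono fun q => ENNReal.ofReal_le_ofReal ?_
          exact mul_le_mul_of_nonneg_right (key _ _) (Real.rpow_nonneg (norm_nonneg _) _)
      _ < ⊤ := hufin
  · intro hcontra
    apply hune
    filter_upwards [hcontra] with x hx
    have hx0 : t * |u x| = 0 := hx
    rcases mul_eq_zero.1 hx0 with h | h
    · exact absurd h ht0.ne'
    · exact abs_eq_zero.1 h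
  · rw [hgsc, hDsc]; exact hNehEq
  · have hEv : Efn N s α p a (fun x => t * |u x|) =
        (1 / 2 - 1 / (2 * p)) * (t * t * G) := by
      rw [Efn, hgsc, hDsc, ← hNehEq]; ring
    have hEu : Efn N s α p a u = (1 / 2 - 1 / (2 * p)) * g := by
      rw [Efn, ← hD_def, ← hgD, hg_eq]; ring
    rw [hEv, hEu]
    have hcoef : (0:ℝ) ≤ 1 / 2 - 1 / (2 * p) := by
      have hp0 : (0:ℝ) < 2 * p := by linarith
      rw [sub_nonneg, div_le_div_iff₀ hp0 (by norm_num : (0:ℝ) < 2)]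
      linarith
    have hXg : t * t * G ≤ g := by
      have h1 : t * t * G ≤ 1 * G := mul_le_mul_of_nonneg_right htt1 hGpos.le
      rw [one_mul] at h1
      exact h1.trans hGg
    exact mul_le_mul_of_nonneg_left hXg hcoef
end
end
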